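/- Let n ≥ 1, and let G₁ = (Fin n, A₁) and G₂ = (Fin n, A₂) be connected graphs (self-loops allowed) with adjacency matrices M₁ and M₂. Let M be the (2n)×(2n) block-diagonal matrix with diagonal blocks M₁ and M₂ (the adjacency matrix of the disjoint union G₁ ⊔ G₂). Then G₁ ≅ G₂ if and only if there exist a permutation π of Fin (2n), with associated permutation matrix P, and an n×n 0-1 matrix B such that Pᵀ · M · P = I₂ ⊗ₖ B, where I₂ is the 2×2 identity matrix. -/

import Mathlib

open Kronecker Matrix

/-- Graph isomorphism between adjacency relations. -/
def IsIso {V₁ : Type*} {V₂ : Type*} (A₁ : V₁ → V₁ → Prop) (A₂ : V₂ → V₂ → Prop) : Prop :=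
  ∃ e : V₁ ≃ V₂, ∀ u v, A₁ u v ↔ A₂ (e u) (e v)

/-- Connectedness: the reflexive-transitive closure relates every pair of vertices. -/
def Conn {V : Type*} (A : V → V → Prop) : Prop :=
  ∀ u v : V, Relation.ReflTransGen A u v

/-- Adjacency matrix (over ℕ) of an adjacency relation on `Fin n`:
the `(u,v)` entry is `1` if `A u v` and `0` otherwise. -/
noncomputable def adjMat {n : ℕ} (A : Fin n → Fin n → Prop) : Matrix (Fin n) (Fin n) ℕ :=
  Matrix.of fun u v => @ite ℕ (A u v) (Classical.propDecidable _) 1 0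

/-- The `(2n)×(2n)` block-diagonal matrix with diagonal blocks `M₁`, `M₂`
(the adjacency matrix of a disjoint union). -/
def blockDiag2 {n : ℕ} (M₁ M₂ : Matrix (Fin n) (Fin n) ℕ) :
    Matrix (Fin (2 * n)) (Fin (2 * n)) ℕ :=
  (Matrix.fromBlocks M₁ 0 0 M₂).submatrix
    (fun i => finSumFinEquiv.symm (Fin.cast (two_mul n) i))
    (fun j => finSumFinEquiv.symm (Fin.cast (two_mul n) j))

/-- The Kronecker product of a `2×2` matrix with an `n×n` matrix, reindexed
as a `(2n)×(2n)` matrix. -/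
def kron2 {n : ℕ} (A : Matrix (Fin 2) (Fin 2) ℕ) (B : Matrix (Fin n) (Fin n) ℕ) :
    Matrix (Fin (2 * n)) (Fin (2 * n)) ℕ :=
  (A ⊗ₖ B).submatrix (fun i => finProdFinEquiv.symm i) (fun j => finProdFinEquiv.symm j)

/-- A 0-1 matrix: every entry is `0` or `1`. -/
def IsZeroOne {I : Type*} {J : Type*} (M : Matrix I J ℕ) : Prop :=
  ∀ i j, M i j = 0 ∨ M i j = 1

private lemma perm_conj {m : ℕ} (σ : Equiv.Perm (Fin m)) (M : Matrix (Fin m) (Fin m) ℕ) :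
    (σ.permMatrix ℕ)ᵀ * M * (σ.permMatrix ℕ) = M.submatrix σ.symm σ.symm := by
  have ht : (σ.permMatrix ℕ)ᵀ = ((σ.symm.toPEquiv.toMatrix) : Matrix (Fin m) (Fin m) ℕ) := by
    rw [Equiv.toPEquiv_symm, PEquiv.toMatrix_symm]
  rw [ht, PEquiv.toMatrix_toPEquiv_mul]
  rw [show (σ.permMatrix ℕ) = σ.toPEquiv.toMatrix from rfl, PEquiv.mul_toMatrix_toPEquiv]
  rfl

private lemma fin2_cases (a : Fin 2) : a = 0 ∨ a = 1 := by
  rw [Fin.ext_iff, Fin.ext_iff]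
  omega

private lemma kron2_apply {n : ℕ} (B : Matrix (Fin n) (Fin n) ℕ) (i j : Fin (2 * n)) :
    kron2 (1 : Matrix (Fin 2) (Fin 2) ℕ) B i j =
      if (finProdFinEquiv.symm i : Fin 2 × Fin n).1 = (finProdFinEquiv.symm j : Fin 2 × Fin n).1
      then B (finProdFinEquiv.symm i : Fin 2 × Fin n).2 (finProdFinEquiv.symm j : Fin 2 × Fin n).2
      else 0 := by
  simp only [kron2, submatrix_apply, kroneckerMap_apply, Matrix.one_apply]
  split_ifs <;> simp

/-- Lemma 1 of the paper. Two connected graphs `G₁ = (Fin n, A₁)`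
and `G₂ = (Fin n, A₂)` (self-loops allowed) are isomorphic iff there are a permutation
`π` of `Fin (2n)` (with permutation matrix `P`) and an `n×n` 0-1 matrix `B` such that
`Pᵀ * M * P = I₂ ⊗ₖ B`, where `M` is the block-diagonal matrix with blocks the
adjacency matrices of `G₁` and `G₂`. -/
theorem stmt0 (n : ℕ) (hn : 1 ≤ n)
    (A₁ A₂ : Fin n → Fin n → Prop) (hs₁ : Symmetric A₁) (hs₂ : Symmetric A₂)
    (hc₁ : Conn A₁) (hc₂ : Conn A₂)
    (M₁ M₂ : Matrix (Fin n) (Fin n) ℕ)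
    (hM₁ : M₁ = adjMat A₁) (hM₂ : M₂ = adjMat A₂)
    (M : Matrix (Fin (2 * n)) (Fin (2 * n)) ℕ) (hM : M = blockDiag2 M₁ M₂) :
    IsIso A₁ A₂ ↔
      ∃ (π : Equiv.Perm (Fin (2 * n))) (B : Matrix (Fin n) (Fin n) ℕ),
        IsZeroOne B ∧
        (π.permMatrix ℕ)ᵀ * M * (π.permMatrix ℕ) = kron2 (1 : Matrix (Fin 2) (Fin 2) ℕ) B := by
  subst hM₁ hM₂ hM
  let eS : Fin (2 * n) ≃ (Fin n ⊕ Fin n) := (finCongr (two_mul n)).trans finSumFinEquiv.symm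
  have hMentry : ∀ i j : Fin (2 * n),
      blockDiag2 (adjMat A₁) (adjMat A₂) i j =
        Matrix.fromBlocks (adjMat A₁) 0 0 (adjMat A₂) (eS i) (eS j) := fun i j => rfl
  constructor
  · rintro ⟨e, he⟩
    -- the equiv sending (0,b) ↦ inl b and (1,b) ↦ inr (e b)
    let g' : (Fin 2 × Fin n) ≃ (Fin n ⊕ Fin n) :=
      { toFun := fun p => if p.1 = 0 then Sum.inl p.2 else Sum.inr (e p.2)
        invFun := Sum.elim (fun b => ((0 : Fin 2), b)) (fun c => ((1 : Fin 2), e.symm c))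
        left_inv := by
          rintro ⟨a, b⟩
          fin_cases a <;> simp
        right_inv := by
          rintro (b | c) <;> simp }
    set τ : Equiv.Perm (Fin (2 * n)) :=
      ((finProdFinEquiv.symm : Fin (2 * n) ≃ Fin 2 × Fin n).trans g').trans eS.symm with hτ
    refine ⟨τ.symm, adjMat A₁, fun i j => ?_, ?_⟩
    · rcases Classical.em (A₁ i j) with h | h
      · right; simp [adjMat, h]
      · left; simp [adjMat, h]
    rw [perm_conj, Equiv.symm_symm]
    ext i j
    rw [submatrix_apply, hMentry, kron2_apply]
    have hτap : ∀ k : Fin (2 * n), eS (τ k) = g' (finProdFinEquiv.symm k) := by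
      intro k
      simp [hτ, Equiv.trans_apply]
    rw [hτap, hτap]
    rcases hp : (finProdFinEquiv.symm i : Fin 2 × Fin n) with ⟨a, b⟩
    rcases hq : (finProdFinEquiv.symm j : Fin 2 × Fin n) with ⟨c, d⟩
    have hg : ∀ (a : Fin 2) (b : Fin n),
        g' (a, b) = if a = 0 then Sum.inl b else Sum.inr (e b) := fun _ _ => rfl
    rw [hg, hg]
    rcases fin2_cases a with rfl | rfl <;> rcases fin2_cases c with rfl | rfl
    · simp
    · simp
    · simp
    · simp only [one_ne_zero, if_neg, reduceIte, Matrix.fromBlocks_apply₂₂]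
      exact (@if_congr ℕ _ _ (Classical.propDecidable _) (Classical.propDecidable _) _ _ _ _
        (he b d) rfl rfl).symm
  · rintro ⟨π, B, hB, hEq⟩
    rw [perm_conj] at hEq
    -- the graph isomorphism from the disjoint union to the kron2 graph
    set g : (Fin n ⊕ Fin n) → Fin 2 × Fin n :=
      fun x => finProdFinEquiv.symm (π (eS.symm x)) with hg
    have hginj : Function.Injective g := by
      intro x y hxy
      simpa using (finProdFinEquiv.symm.injective.comp
        (π.injective.comp eS.symm.injective)) hxy
    have key : ∀ x y : Fin n ⊕ Fin n,
        Matrix.fromBlocks (adjMat A₁) 0 0 (adjMat A₂) x y =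
          if (g x).1 = (g y).1 then B (g x).2 (g y).2 else 0 := by
      intro x y
      have h := congrFun (congrFun hEq (π (eS.symm x))) (π (eS.symm y))
      rw [submatrix_apply, kron2_apply] at h
      simpa [hMentry, hg] using h
    -- first coordinates are constant on each connected component
    have step₁ : ∀ ⦃b c : Fin n⦄, A₁ b c → (g (Sum.inl b)).1 = (g (Sum.inl c)).1 := by
      intro b c hr
      by_contra hne
      have hk := key (Sum.inl b) (Sum.inl c)
      rw [if_neg hne, Matrix.fromBlocks_apply₁₁] at hk
      simp only [adjMat, Matrix.of_apply] at hk
      rw [if_pos hr] at hk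
      exact one_ne_zero hk
    have step₂ : ∀ ⦃b c : Fin n⦄, A₂ b c → (g (Sum.inr b)).1 = (g (Sum.inr c)).1 := by
      intro b c hr
      by_contra hne
      have hk := key (Sum.inr b) (Sum.inr c)
      rw [if_neg hne, Matrix.fromBlocks_apply₂₂] at hk
      simp only [adjMat, Matrix.of_apply] at hk
      rw [if_pos hr] at hk
      exact one_ne_zero hk
    have const₁ : ∀ u v : Fin n, (g (Sum.inl u)).1 = (g (Sum.inl v)).1 := by
      intro u v
      induction hc₁ u v with
      | refl => rfl
      | tail _ hr ih => exact ih.trans (step₁ hr)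
    have const₂ : ∀ u v : Fin n, (g (Sum.inr u)).1 = (g (Sum.inr v)).1 := by
      intro u v
      induction hc₂ u v with
      | refl => rfl
      | tail _ hr ih => exact ih.trans (step₂ hr)
    set e₁ : Fin n → Fin n := fun u => (g (Sum.inl u)).2 with he₁
    set e₂ : Fin n → Fin n := fun u => (g (Sum.inr u)).2 with he₂
    have hinj₁ : Function.Injective e₁ := by
      intro u v huv
      have : g (Sum.inl u) = g (Sum.inl v) := Prod.ext (const₁ u v) huv
      exact Sum.inl_injective (hginj this)
    have hinj₂ : Function.Injective e₂ := by
      intro u v huv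
      have : g (Sum.inr u) = g (Sum.inr v) := Prod.ext (const₂ u v) huv
      exact Sum.inr_injective (hginj this)
    have h1 : ∀ u v, A₁ u v ↔ B (e₁ u) (e₁ v) = 1 := by
      intro u v
      have hk := key (Sum.inl u) (Sum.inl v)
      rw [if_pos (const₁ u v), Matrix.fromBlocks_apply₁₁] at hk
      simp only [adjMat, Matrix.of_apply] at hk
      constructor
      · intro h; rw [if_pos h] at hk; exact hk.symm
      · intro h
        by_contra hA
        rw [if_neg hA, h] at hk
        exact one_ne_zero hk.symm
    have h2 : ∀ u v, A₂ u v ↔ B (e₂ u) (e₂ v) = 1 := by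
      intro u v
      have hk := key (Sum.inr u) (Sum.inr v)
      rw [if_pos (const₂ u v), Matrix.fromBlocks_apply₂₂] at hk
      simp only [adjMat, Matrix.of_apply] at hk
      constructor
      · intro h; rw [if_pos h] at hk; exact hk.symm
      · intro h
        by_contra hA
        rw [if_neg hA, h] at hk
        exact one_ne_zero hk.symm
    have hbij₁ := (Finite.injective_iff_bijective).mp hinj₁
    have hbij₂ := (Finite.injective_iff_bijective).mp hinj₂
    refine ⟨(Equiv.ofBijective e₁ hbij₁).trans (Equiv.ofBijective e₂ hbij₂).symm, fun u v => ?_⟩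
    rw [h1 u v, h2]
    have hcomp : ∀ w, e₂ ((Equiv.ofBijective e₂ hbij₂).symm ((Equiv.ofBijective e₁ hbij₁) w))
        = e₁ w := fun w => (Equiv.ofBijective e₂ hbij₂).apply_symm_apply _
    rw [Equiv.trans_apply, Equiv.trans_apply, hcomp, hcomp]
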